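/- With A = [[0,−mω²],[1/m,0]], B = diag(√(η_x k_x), √(η_p k_p)), Q = (ℏ²/4)diag(k_p, k_x), χ = diag(1/η_x, 1/η_p), let Σ_∞ = [[v_x, c],[c, v_p]] be a positive-definite solution of the algebraic Riccati equation. Then det Σ_∞ = (ℏ²/4)·(k_x v_x + k_p v_p)/(η_x k_x v_x + η_p k_p v_p). -/

import Mathlib

open Matrix

theorem stmt_12 (m ω ℏ kx kp ηx ηp vx vp c : ℝ)
    (hm : 0 < m) (hω : 0 < ω) (hℏ : 0 < ℏ) (hkx : 0 < kx) (hkp : 0 < kp)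
    (hηx : 0 < ηx) (hηx1 : ηx ≤ 1) (hηp : 0 < ηp) (hηp1 : ηp ≤ 1)
    (hPD : (!![vx, c; c, vp] : Matrix (Fin 2) (Fin 2) ℝ).PosDef)
    (hARE :
      let Sinf : Matrix (Fin 2) (Fin 2) ℝ := !![vx, c; c, vp]
      let A : Matrix (Fin 2) (Fin 2) ℝ := !![0, -m * ω ^ 2; 1 / m, 0]
      let B : Matrix (Fin 2) (Fin 2) ℝ := !![Real.sqrt (ηx * kx), 0; 0, Real.sqrt (ηp * kp)]
      Sinf * A + Aᵀ * Sinf - Sinf * B * Bᵀ * Sinf + (ℏ ^ 2 / 4) • !![kp, 0; 0, kx] = 0) :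
    (!![vx, c; c, vp] : Matrix (Fin 2) (Fin 2) ℝ).det =
      ℏ ^ 2 / 4 * ((kx * vx + kp * vp) / (ηx * kx * vx + ηp * kp * vp)) := by
  have hsx : Real.sqrt (ηx * kx) * Real.sqrt (ηx * kx) = ηx * kx :=
    Real.mul_self_sqrt (by positivity)
  have hsp : Real.sqrt (ηp * kp) * Real.sqrt (ηp * kp) = ηp * kp :=
    Real.mul_self_sqrt (by positivity)
  set s1 := Real.sqrt (ηx * kx) with hs1
  set s2 := Real.sqrt (ηp * kp) with hs2
  simp only at hARE
  have h00 := congrFun (congrFun hARE 0) 0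
  have h01 := congrFun (congrFun hARE 0) 1
  have h11 := congrFun (congrFun hARE 1) 1
  simp [Matrix.mul_apply, Fin.sum_univ_two, Matrix.add_apply, Matrix.sub_apply,
    Matrix.smul_apply, Matrix.transpose_apply, Matrix.cons_val_zero, Matrix.cons_val_one,
    Matrix.head_cons, Matrix.vecHead, Matrix.vecTail, Function.comp, Matrix.vecMul, dotProduct] at h00 h01 h11
  -- diagonal entries positive
  have hvx : 0 < vx := by
    have := hPD.dotProduct_mulVec_pos (x := Pi.single 0 1) (by simp [Function.ne_iff])
    simpa [Matrix.mulVec, dotProduct, Fin.sum_univ_two, Pi.single_apply] using this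
  have hvp : 0 < vp := by
    have := hPD.dotProduct_mulVec_pos (x := Pi.single 1 1) (by simp [Function.ne_iff])
    simpa [Matrix.mulVec, dotProduct, Fin.sum_univ_two, Pi.single_apply] using this
  have hden : ηx * kx * vx + ηp * kp * vp > 0 := by positivity
  rw [Matrix.det_fin_two_of, mul_div_assoc' , eq_div_iff hden.ne']
  have hm' : m ≠ 0 := hm.ne'
  field_simp at h00 h01 h11
  linear_combination (norm := (field_simp; ring)) (-(vp/(4*m)))*h00 - (vx/4)*h11 + (2*c/m)*h01
    - ((vx*vp - c*c)*vx)*hsx - ((vx*vp - c*c)*vp)*hsp
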